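/- arXiv:2012.08376 — 3 statements merged into one kernel-verified Lean document; each statement's English description precedes it below -/
import Mathlib

section
/- Let f and g be slice regular functions on a symmetric domain Ω_D ⊂ ℍ. Then for all x ∈ Ω_D ∖ ℝ: (∂_c ∂_s)(f·g) = (∂_c ∂_s f)·(v_s g) + (1/2)[(∂_s f)·(∂_c g) + (∂_c f)·(∂_s g)] + (v_s f)·(∂_c ∂_s g). -/
noncomputable section

open Quaternion

abbrev ℍq := Quaternion ℝ

/-- Spherical value of a function of a quaternionic variable. -/
def svalue (f : ℍq → ℍq) (x : ℍq) : ℍq := (f x + f (star x)) / 2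

/-- Spherical derivative of a function of a quaternionic variable. -/
def sderiv' (f : ℍq → ℍq) (x : ℍq) : ℍq := (2 * x.im)⁻¹ * (f x - f (star x))

/-- The imaginary unit `Im(x)/|Im(x)|` attached to a (non-real) quaternion. -/
def qJ (x : ℍq) : ℍq := (‖x.im‖)⁻¹ • x.im

/-- Slice (Cullen) derivative `∂_c f = (1/2)(∂/∂α − I ∂/∂β) f` at `x = α + Iβ`. -/
def cderiv (f : ℍq → ℍq) (x : ℍq) : ℍq :=
  (1/2 : ℝ) • (fderiv ℝ f x 1 - qJ x * fderiv ℝ f x (qJ x))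

/-- The conjugate operator `∂̄_c f = (1/2)(∂/∂α + I ∂/∂β) f`. -/
def cderivBar (f : ℍq → ℍq) (x : ℍq) : ℍq :=
  (1/2 : ℝ) • (fderiv ℝ f x 1 + qJ x * fderiv ℝ f x (qJ x))

/-- A circular (axially symmetric) subset of the quaternions. -/
def IsCircular (Ω : Set ℍq) : Prop :=
  ∀ x ∈ Ω, ∀ y : ℍq, y.re = x.re → ‖y.im‖ = ‖x.im‖ → y ∈ Ω

/-- A slice function on `Ω`: it is determined by the representation formula
`f(α + Iβ) = F₀(α,β) + I F₁(α,β)` with `F₀ = v_s f`, `F₁ = β ∂_s f`. -/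
def IsSlice (Ω : Set ℍq) (f : ℍq → ℍq) : Prop :=
  ∀ x ∈ Ω, ∀ y ∈ Ω, x.re = y.re → ‖x.im‖ = ‖y.im‖ →
    f x = svalue f y + x.im * sderiv' f y

/-- A slice regular function on a circular domain: a real-differentiable slice
function whose stem function is holomorphic, i.e. `∂̄_c f = 0` off the reals. -/
def IsSliceRegular (Ω : Set ℍq) (f : ℍq → ℍq) : Prop :=
  IsSlice Ω f ∧ DifferentiableOn ℝ f Ω ∧ ∀ x ∈ Ω, x.im ≠ 0 → cderivBar f x = 0

/-- Pointwise formula for the slice product `f·g = 𝓘(FG)` of two slice functions. -/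
def sprod (f g : ℍq → ℍq) (x : ℍq) : ℍq :=
  svalue f x * svalue g x + x.im * x.im * (sderiv' f x * sderiv' g x)
    + x.im * (svalue f x * sderiv' g x + sderiv' f x * svalue g x)

/-- Characteristic polynomial of `q₀`: `Δ_{q₀}(x) = x² − 2 Re(q₀) x + |q₀|²`. -/
def Delta (q₀ : ℍq) (x : ℍq) : ℍq := x ^ 2 - 2 * (q₀.re : ℍq) * x + ((‖q₀‖ ^ 2 : ℝ) : ℍq)

/-- The operator `∂_c ∂_s`. -/
def opCS (f : ℍq → ℍq) : ℍq → ℍq := cderiv (sderiv' f)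

/-- The operator `∂_s ∂_c`. -/
def opSC (f : ℍq → ℍq) : ℍq → ℍq := sderiv' (cderiv f)

-- infrastructure
instance : StarModule ℝ ℍq := ⟨fun r a => by ext <;> simp⟩

def imCLM : ℍq →L[ℝ] ℍq :=
  { toLinearMap :=
    { toFun := fun x => x.im
      map_add' := fun x y => by ext <;> simp [QuaternionAlgebra.im]
      map_smul' := fun r x => by ext <;> simp [QuaternionAlgebra.im] }
    cont := continuous_im }

@[simp] lemma imCLM_apply (x : ℍq) : imCLM x = x.im := rfl

def starCLE : ℍq ≃L[ℝ] ℍq := starL' ℝ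

@[simp] lemma starCLE_apply (x : ℍq) : starCLE x = star x := rfl

lemma isOpen_imne : IsOpen {y : ℍq | y.im ≠ 0} :=
  isOpen_compl_singleton.preimage continuous_im

lemma aux_im_mul_im (x : ℍq) : x.im * x.im = ((-(‖x.im‖ * ‖x.im‖) : ℝ) : ℍq) := by
  have h := Quaternion.im_sq x
  rw [sq] at h
  rw [h, Quaternion.normSq_eq_norm_mul_self, Quaternion.coe_neg]

lemma star_im' (x : ℍq) : star x.im = -x.im := by ext <;> simp

lemma two_coe : (2 : ℍq) = ((2:ℝ) : ℍq) := by
  have h1 : ((2:ℕ) : ℍq) = (2 : ℍq) := by norm_cast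
  have h2 : ((2:ℕ) : ℝ) = (2 : ℝ) := by norm_cast
  rw [← h1, ← h2, Quaternion.coe_natCast]

lemma aux_im_inv (x : ℍq) : (x.im)⁻¹ = (-(‖x.im‖ * ‖x.im‖)⁻¹ : ℝ) • x.im := by
  rw [Quaternion.inv_def, star_im', smul_neg, ← neg_smul,
    Quaternion.normSq_eq_norm_mul_self]

lemma div_two_smul (q : ℍq) : q / 2 = (2⁻¹ : ℝ) • q := by
  rw [div_eq_mul_inv]
  rw [two_coe, ← Quaternion.coe_inv, Quaternion.mul_coe_eq_smul]

lemma svalue_star (f : ℍq → ℍq) (x : ℍq) : svalue f (star x) = svalue f x := by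
  simp [svalue, star_star, add_comm]

lemma sderiv'_star (f : ℍq → ℍq) (x : ℍq) : sderiv' f (star x) = sderiv' f x := by
  rw [sderiv', sderiv', Quaternion.im_star, star_star, mul_neg, inv_neg, neg_mul]
  rw [← mul_neg, neg_sub]

lemma qJ_star (x : ℍq) : qJ (star x) = - qJ x := by
  simp [qJ, Quaternion.im_star]

lemma repr_eq (f : ℍq → ℍq) (y : ℍq) (hy : y.im ≠ 0) :
    f y = svalue f y + y.im * sderiv' f y := by
  rw [svalue, sderiv', mul_inv_rev, ← mul_assoc, ← mul_assoc, mul_inv_cancel₀ hy, one_mul,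
    div_two_smul]
  rw [two_coe, ← Quaternion.coe_inv, Quaternion.coe_mul_eq_smul]
  rw [smul_add, smul_sub]
  abel_nf
  module

-- Part 2 : differentiability

lemma diff_star_comp {f : ℍq → ℍq} {x : ℍq} (h : DifferentiableAt ℝ f (star x)) :
    DifferentiableAt ℝ (fun y => f (star y)) x := by
  have := h.comp x (starCLE.differentiableAt (x := x))
  exact this

lemma diff_svalue {f : ℍq → ℍq} {x : ℍq} (h1 : DifferentiableAt ℝ f x)
    (h2 : DifferentiableAt ℝ f (star x)) : DifferentiableAt ℝ (svalue f) x := by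
  have : svalue f = fun y => (2⁻¹:ℝ) • (f y + f (star y)) := by
    funext y; rw [svalue, div_two_smul]
  rw [this]
  exact ((h1.add (diff_star_comp h2)).const_smul (2⁻¹:ℝ))

lemma diff_sderiv' {f : ℍq → ℍq} {x : ℍq} (hx : x.im ≠ 0) (h1 : DifferentiableAt ℝ f x)
    (h2 : DifferentiableAt ℝ f (star x)) : DifferentiableAt ℝ (sderiv' f) x := by
  have hin : DifferentiableAt ℝ (fun y : ℍq => (2 * y.im)⁻¹) x := by
    have h2n : (2 : ℍq) * x.im ≠ 0 := mul_ne_zero (by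
      rw [two_coe]
      intro h
      have := congrArg QuaternionAlgebra.re h
      norm_num at this) hx
    have hm : DifferentiableAt ℝ (fun y : ℍq => 2 * y.im) x :=
      (imCLM.differentiableAt (x := x)).const_mul 2
    exact (differentiableAt_inv h2n).comp x hm
  exact hin.mul (h1.sub (diff_star_comp h2))

lemma fderiv_mul_apply' {a b : ℍq → ℍq} {x : ℍq} (ha : DifferentiableAt ℝ a x)
    (hb : DifferentiableAt ℝ b x) (w : ℍq) :
    fderiv ℝ (fun y => a y * b y) x w
      = fderiv ℝ a x w * b x + a x * fderiv ℝ b x w := by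
  rw [show (fun y => a y * b y) = a * b from rfl, (ha.hasFDerivAt.mul' hb.hasFDerivAt).fderiv]
  simp [ContinuousLinearMap.smulRight_apply, smul_eq_mul, add_comm]

/-- derivative of star-even function at star point -/
lemma fderiv_star_pt {h : ℍq → ℍq} {x : ℍq} (heven : ∀ y, h (star y) = h y)
    (w : ℍq) : fderiv ℝ h (star x) w = fderiv ℝ h x (star w) := by
  have hcomp : h = h ∘ (starCLE : ℍq ≃L[ℝ] ℍq) := by
    funext y; simp [heven y]
  conv_lhs => rw [hcomp]
  rw [starCLE.comp_right_fderiv]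
  simp

-- Part 3 : decomposition of fderiv and Cauchy-Riemann

lemma hasFDerivAt_im (x : ℍq) : HasFDerivAt (fun y : ℍq => y.im) imCLM x :=
  imCLM.hasFDerivAt

lemma fderiv_decomp {f : ℍq → ℍq} {x : ℍq} (hx : x.im ≠ 0)
    (hv : DifferentiableAt ℝ (svalue f) x) (hs : DifferentiableAt ℝ (sderiv' f) x) (w : ℍq) :
    fderiv ℝ f x w =
      fderiv ℝ (svalue f) x w + (w.im * sderiv' f x + x.im * fderiv ℝ (sderiv' f) x w) := by
  have hev : f =ᶠ[nhds x] fun y => svalue f y + y.im * sderiv' f y := by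
    filter_upwards [isOpen_imne.mem_nhds hx] with y hy
    exact repr_eq f y hy
  rw [hev.fderiv_eq]
  have hmul := (hasFDerivAt_im x).mul' hs.hasFDerivAt
  rw [show (fun y => svalue f y + y.im * sderiv' f y) = svalue f + (fun y : ℍq => y.im) * sderiv' f
    from rfl, (hv.hasFDerivAt.add hmul).fderiv]
  simp only [ContinuousLinearMap.add_apply, ContinuousLinearMap.smul_apply,
    ContinuousLinearMap.smulRight_apply, imCLM_apply, smul_eq_mul]
  abel

lemma CR_rel {f : ℍq → ℍq} {x : ℍq} (hxi : x.im ≠ 0) (h0 : cderivBar f x = 0) :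
    fderiv ℝ f x x.im = x.im * fderiv ℝ f x 1 := by
  have hr : ‖x.im‖ ≠ 0 := norm_ne_zero_iff.2 hxi
  rw [cderivBar, smul_eq_zero] at h0
  have h' := h0.resolve_left (by norm_num)
  rw [qJ, map_smul, smul_mul_smul_comm] at h'
  have hD1 : fderiv ℝ f x 1 =
      -((‖x.im‖⁻¹ * ‖x.im‖⁻¹) • (x.im * fderiv ℝ f x x.im)) :=
    eq_neg_of_add_eq_zero_left h'
  rw [hD1, mul_neg, mul_smul_comm, ← mul_assoc, aux_im_mul_im,
    Quaternion.coe_mul_eq_smul, smul_smul]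
  rw [show (‖x.im‖⁻¹ * ‖x.im‖⁻¹ * -(‖x.im‖ * ‖x.im‖) : ℝ) = -1 by field_simp]
  simp

-- Part 4 : key relations from Cauchy-Riemann

lemma im_one : (1 : ℍq).im = 0 := by ext <;> simp

lemma add_self_cancel {a b : ℍq} (h : a + a = b + b) : a = b := by
  have h2 : (2⁻¹:ℝ) • (a + a) = (2⁻¹:ℝ) • (b + b) := by rw [h]
  have ha : (2⁻¹:ℝ) • (a + a) = a := by module
  have hb : (2⁻¹:ℝ) • (b + b) = b := by module
  rw [ha, hb] at h2
  exact h2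

lemma star_one' : star (1 : ℍq) = 1 := star_one _

lemma key_rels {f : ℍq → ℍq} {x : ℍq} (hxi : x.im ≠ 0)
    (hdvx : DifferentiableAt ℝ (svalue f) x) (hdsx : DifferentiableAt ℝ (sderiv' f) x)
    (hdvsx : DifferentiableAt ℝ (svalue f) (star x))
    (hdssx : DifferentiableAt ℝ (sderiv' f) (star x))
    (h0x : cderivBar f x = 0) (h0sx : cderivBar f (star x) = 0) :
    fderiv ℝ (svalue f) x x.im = x.im * (x.im * fderiv ℝ (sderiv' f) x 1)
    ∧ sderiv' f x + fderiv ℝ (sderiv' f) x x.im = fderiv ℝ (svalue f) x 1 := by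
  have hsxi : (star x).im ≠ 0 := by rw [Quaternion.im_star]; simpa using hxi
  have hstarn : star x.im = -x.im := star_im' x
  have hCR1 : fderiv ℝ f x x.im = x.im * fderiv ℝ f x 1 := CR_rel hxi h0x
  have hCR2 : fderiv ℝ f (star x) x.im = x.im * fderiv ℝ f (star x) 1 := by
    have h := CR_rel hsxi h0sx
    rw [Quaternion.im_star, map_neg] at h
    have h' : -(fderiv ℝ f (star x) x.im) = -(x.im * fderiv ℝ f (star x) 1) := by
      rw [h]; noncomm_ring
    exact neg_injective h'
  have hvst := fderiv_star_pt (x := x) (svalue_star f)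
  have hsst := fderiv_star_pt (x := x) (sderiv'_star f)
  set A := fderiv ℝ (svalue f) x 1 with hA
  set B := fderiv ℝ (sderiv' f) x 1 with hB
  set An := fderiv ℝ (svalue f) x x.im with hAn
  set Bn := fderiv ℝ (sderiv' f) x x.im with hBn
  set s0 := sderiv' f x with hs0
  have hf1 : fderiv ℝ f x 1 = A + x.im * B := by
    rw [fderiv_decomp hxi hdvx hdsx 1, _root_.im_one, zero_mul, zero_add]
  have hfn : fderiv ℝ f x x.im = An + (x.im * s0 + x.im * Bn) := by
    rw [fderiv_decomp hxi hdvx hdsx x.im, Quaternion.im_idem]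
  have hf1' : fderiv ℝ f (star x) 1 = A - x.im * B := by
    rw [fderiv_decomp hsxi hdvsx hdssx 1, _root_.im_one, zero_mul, zero_add, hvst 1, hsst 1,
      star_one', Quaternion.im_star, ← hA, ← hB]
    noncomm_ring
  have hfn' : fderiv ℝ f (star x) x.im = -An + (x.im * s0 + x.im * Bn) := by
    rw [fderiv_decomp hsxi hdvsx hdssx x.im, hvst x.im, hsst x.im, hstarn, map_neg, map_neg,
      Quaternion.im_star, sderiv'_star, Quaternion.im_idem, ← hAn, ← hBn, ← hs0]
    noncomm_ring
  have E1 : An + (x.im * s0 + x.im * Bn) = x.im * (A + x.im * B) := by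
    rw [← hf1, ← hfn]; exact hCR1
  have E2 : -An + (x.im * s0 + x.im * Bn) = x.im * (A - x.im * B) := by
    rw [← hf1', ← hfn']; exact hCR2
  constructor
  · apply add_self_cancel
    calc An + An
        = (An + (x.im * s0 + x.im * Bn)) - (-An + (x.im * s0 + x.im * Bn)) := by abel
      _ = x.im * (A + x.im * B) - x.im * (A - x.im * B) := by rw [E1, E2]
      _ = x.im * (x.im * B) + x.im * (x.im * B) := by noncomm_ring
  · have hmul : x.im * (s0 + Bn) = x.im * A := by
      apply add_self_cancel
      calc x.im * (s0 + Bn) + x.im * (s0 + Bn)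
          = (An + (x.im * s0 + x.im * Bn)) + (-An + (x.im * s0 + x.im * Bn)) := by noncomm_ring
        _ = x.im * (A + x.im * B) + x.im * (A - x.im * B) := by rw [E1, E2]
        _ = x.im * A + x.im * A := by noncomm_ring
    exact mul_left_cancel₀ hxi hmul

-- Part 5 : evaluations

lemma svalue_of_even {h : ℍq → ℍq} (he : ∀ y, h (star y) = h y) (x : ℍq) :
    svalue h x = h x := by
  rw [svalue, he, div_two_smul]
  module

lemma sderiv'_of_even {h : ℍq → ℍq} (he : ∀ y, h (star y) = h y) (x : ℍq) :
    sderiv' h x = 0 := by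
  rw [sderiv', he, sub_self, mul_zero]

lemma two_im_inv (x : ℍq) :
    (2 * x.im)⁻¹ = ((2⁻¹ : ℝ) * (-(‖x.im‖ * ‖x.im‖)⁻¹ : ℝ)) • x.im := by
  rw [mul_inv_rev, aux_im_inv, two_coe, ← Quaternion.coe_inv, smul_mul_assoc,
    Quaternion.mul_coe_eq_smul, smul_smul, mul_comm]

lemma inv2im_mul_smul (x : ℍq) (hxi : x.im ≠ 0) (c : ℝ) (q : ℍq) :
    (2 * x.im)⁻¹ * (c • (x.im * q)) = (2⁻¹ * c : ℝ) • q := by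
  have hr : ‖x.im‖ ≠ 0 := norm_ne_zero_iff.2 hxi
  rw [two_im_inv, smul_mul_assoc, mul_smul_comm, ← mul_assoc, aux_im_mul_im,
    Quaternion.coe_mul_eq_smul, smul_smul, smul_smul]
  rw [show (2⁻¹ * -(‖x.im‖ * ‖x.im‖)⁻¹ * c * -(‖x.im‖ * ‖x.im‖) : ℝ) = 2⁻¹ * c by
    field_simp]

lemma inv2im_mul (x : ℍq) (hxi : x.im ≠ 0) (q : ℍq) :
    (2 * x.im)⁻¹ * (x.im * q + x.im * q) = q := by
  have h : x.im * q + x.im * q = ((2:ℝ)) • (x.im * q) := by module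
  rw [h, inv2im_mul_smul x hxi 2 q]
  rw [show (2⁻¹ * 2 : ℝ) = 1 by norm_num, one_smul]

lemma cderiv_at (h : ℍq → ℍq) (x : ℍq) :
    cderiv h x = (1/2 : ℝ) • (fderiv ℝ h x 1
      - (‖x.im‖⁻¹ * ‖x.im‖⁻¹) • (x.im * fderiv ℝ h x x.im)) := by
  rw [cderiv, qJ, map_smul, smul_mul_smul_comm]

lemma cderiv_at_star (h : ℍq → ℍq) (x : ℍq) :
    cderiv h (star x) = (1/2 : ℝ) • (fderiv ℝ h (star x) 1
      - (‖x.im‖⁻¹ * ‖x.im‖⁻¹) • (x.im * fderiv ℝ h (star x) x.im)) := by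
  rw [cderiv, qJ_star, qJ, map_neg, map_smul, neg_mul_neg, smul_mul_smul_comm]

-- Part 6 : svalue/sderiv' of cderiv for even functions

lemma svalue_cderiv_even {h : ℍq → ℍq} (he : ∀ y, h (star y) = h y) (x : ℍq) :
    svalue (cderiv h) x = (2⁻¹ : ℝ) • fderiv ℝ h x 1 := by
  have h1 := fderiv_star_pt (x := x) he 1
  have h2 := fderiv_star_pt (x := x) he x.im
  rw [svalue, cderiv_at, cderiv_at_star, h1, h2, star_one', star_im', map_neg, mul_neg,
    smul_neg, sub_neg_eq_add, div_two_smul]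
  module

lemma sderiv'_cderiv_even {h : ℍq → ℍq} (he : ∀ y, h (star y) = h y) (x : ℍq)
    (hxi : x.im ≠ 0) :
    sderiv' (cderiv h) x
      = (-(2⁻¹ * (‖x.im‖⁻¹ * ‖x.im‖⁻¹)) : ℝ) • fderiv ℝ h x x.im := by
  have h1 := fderiv_star_pt (x := x) he 1
  have h2 := fderiv_star_pt (x := x) he x.im
  rw [sderiv', cderiv_at, cderiv_at_star, h1, h2, star_one', star_im', map_neg, mul_neg,
    smul_neg, sub_neg_eq_add]
  have hd : (1/2 : ℝ) • (fderiv ℝ h x 1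
        - (‖x.im‖⁻¹ * ‖x.im‖⁻¹) • (x.im * fderiv ℝ h x x.im))
      - (1/2 : ℝ) • (fderiv ℝ h x 1
        + (‖x.im‖⁻¹ * ‖x.im‖⁻¹) • (x.im * fderiv ℝ h x x.im))
      = (-(‖x.im‖⁻¹ * ‖x.im‖⁻¹) : ℝ) • (x.im * fderiv ℝ h x x.im) := by
    module
  rw [hd, inv2im_mul_smul x hxi _ _]
  congr 1
  ring

-- Part 7 : master lemma for slice-regular-type hypotheses

lemma master {f : ℍq → ℍq} {x : ℍq} (hxi : x.im ≠ 0)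
    (hdvx : DifferentiableAt ℝ (svalue f) x) (hdsx : DifferentiableAt ℝ (sderiv' f) x)
    (hdvsx : DifferentiableAt ℝ (svalue f) (star x))
    (hdssx : DifferentiableAt ℝ (sderiv' f) (star x))
    (h0x : cderivBar f x = 0) (h0sx : cderivBar f (star x) = 0) :
    svalue (cderiv f) x = fderiv ℝ (svalue f) x 1
    ∧ sderiv' (cderiv f) x = fderiv ℝ (sderiv' f) x 1
    ∧ fderiv ℝ (svalue f) x x.im = x.im * (x.im * fderiv ℝ (sderiv' f) x 1)
    ∧ sderiv' f x + fderiv ℝ (sderiv' f) x x.im = fderiv ℝ (svalue f) x 1 := by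
  have hr : ‖x.im‖ ≠ 0 := norm_ne_zero_iff.2 hxi
  have hsxi : (star x).im ≠ 0 := by rw [Quaternion.im_star]; simpa using hxi
  obtain ⟨key1, key2⟩ := key_rels hxi hdvx hdsx hdvsx hdssx h0x h0sx
  set A := fderiv ℝ (svalue f) x 1 with hA
  set B := fderiv ℝ (sderiv' f) x 1 with hB
  set An := fderiv ℝ (svalue f) x x.im with hAn
  set Bn := fderiv ℝ (sderiv' f) x x.im with hBn
  set s0 := sderiv' f x with hs0
  have hvst := fderiv_star_pt (x := x) (svalue_star f)
  have hsst := fderiv_star_pt (x := x) (sderiv'_star f)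
  have hf1 : fderiv ℝ f x 1 = A + x.im * B := by
    rw [fderiv_decomp hxi hdvx hdsx 1, _root_.im_one, zero_mul, zero_add]
  have hfn : fderiv ℝ f x x.im = An + (x.im * s0 + x.im * Bn) := by
    rw [fderiv_decomp hxi hdvx hdsx x.im, Quaternion.im_idem]
  have hf1' : fderiv ℝ f (star x) 1 = A - x.im * B := by
    rw [fderiv_decomp hsxi hdvsx hdssx 1, _root_.im_one, zero_mul, zero_add, hvst 1, hsst 1,
      star_one', Quaternion.im_star, ← hA, ← hB]
    noncomm_ring
  have hfn' : fderiv ℝ f (star x) x.im = -An + (x.im * s0 + x.im * Bn) := by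
    rw [fderiv_decomp hsxi hdvsx hdssx x.im, hvst x.im, hsst x.im, star_im' x, map_neg, map_neg,
      Quaternion.im_star, sderiv'_star, Quaternion.im_idem, ← hAn, ← hBn, ← hs0]
    noncomm_ring
  -- the multiplied derivative in direction x.im
  have him : x.im * (An + (x.im * s0 + x.im * Bn))
      = (-(‖x.im‖ * ‖x.im‖) : ℝ) • (x.im * B + A) := by
    rw [key1]
    have e1 : x.im * (x.im * (x.im * B) + (x.im * s0 + x.im * Bn))
        = (x.im * x.im) * (x.im * B) + ((x.im * x.im) * s0 + (x.im * x.im) * Bn) := by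
      noncomm_ring
    rw [e1, aux_im_mul_im, Quaternion.coe_mul_eq_smul, Quaternion.coe_mul_eq_smul,
      Quaternion.coe_mul_eq_smul, ← smul_add, ← smul_add, key2]
  have him' : x.im * (-An + (x.im * s0 + x.im * Bn))
      = (‖x.im‖ * ‖x.im‖ : ℝ) • (x.im * B) + (-(‖x.im‖ * ‖x.im‖) : ℝ) • A := by
    rw [key1]
    have e1 : x.im * (-(x.im * (x.im * B)) + (x.im * s0 + x.im * Bn))
        = -((x.im * x.im) * (x.im * B)) + ((x.im * x.im) * s0 + (x.im * x.im) * Bn) := by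
      noncomm_ring
    rw [e1, aux_im_mul_im, Quaternion.coe_mul_eq_smul, Quaternion.coe_mul_eq_smul,
      Quaternion.coe_mul_eq_smul, ← smul_add, key2, ← neg_smul]
    module
  have hcx : cderiv f x = A + x.im * B := by
    rw [cderiv_at, hf1, hfn, him, smul_smul]
    rw [show ((‖x.im‖⁻¹ * ‖x.im‖⁻¹) * -(‖x.im‖ * ‖x.im‖) : ℝ) = -1 by field_simp]
    module
  have hcsx : cderiv f (star x) = A - x.im * B := by
    rw [cderiv_at_star, hf1', hfn', him', smul_add, smul_smul, smul_smul]
    rw [show ((‖x.im‖⁻¹ * ‖x.im‖⁻¹) * (‖x.im‖ * ‖x.im‖) : ℝ) = 1 by field_simp,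
      show ((‖x.im‖⁻¹ * ‖x.im‖⁻¹) * -(‖x.im‖ * ‖x.im‖) : ℝ) = -1 by field_simp]
    module
  refine ⟨?_, ?_, key1, key2⟩
  · rw [svalue, hcx, hcsx, div_two_smul]
    module
  · rw [sderiv', hcx, hcsx]
    have hd : (A + x.im * B) - (A - x.im * B) = x.im * B + x.im * B := by abel
    rw [hd, inv2im_mul x hxi B]

-- Part 8 : spherical derivative / value of a slice product, and trivia

def sprod' (f g : ℍq → ℍq) (x : ℍq) : ℍq :=
  svalue f x * svalue g x + x.im * x.im * (sderiv' f x * sderiv' g x)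
    + x.im * (svalue f x * sderiv' g x + sderiv' f x * svalue g x)

lemma sprod'_star (f g : ℍq → ℍq) (y : ℍq) :
    sprod' f g (star y) = svalue f y * svalue g y + y.im * y.im * (sderiv' f y * sderiv' g y)
      - y.im * (svalue f y * sderiv' g y + sderiv' f y * svalue g y) := by
  rw [sprod', svalue_star, svalue_star, sderiv'_star, sderiv'_star, Quaternion.im_star]
  noncomm_ring

lemma sderiv'_sprod' (f g : ℍq → ℍq) (y : ℍq) (hy : y.im ≠ 0) :
    sderiv' (sprod' f g) y = svalue f y * sderiv' g y + sderiv' f y * svalue g y := by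
  rw [sderiv']
  have hd : sprod' f g y - sprod' f g (star y)
      = y.im * (svalue f y * sderiv' g y + sderiv' f y * svalue g y)
        + y.im * (svalue f y * sderiv' g y + sderiv' f y * svalue g y) := by
    rw [sprod', sprod'_star]
    abel
  rw [hd, inv2im_mul y hy]

lemma svalue_svalue (g : ℍq → ℍq) (x : ℍq) : svalue (svalue g) x = svalue g x :=
  svalue_of_even (svalue_star g) x

lemma sderiv'_svalue (g : ℍq → ℍq) (x : ℍq) : sderiv' (svalue g) x = 0 :=
  sderiv'_of_even (svalue_star g) x

lemma svalue_sderiv' (g : ℍq → ℍq) (x : ℍq) : svalue (sderiv' g) x = sderiv' g x :=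
  svalue_of_even (sderiv'_star g) x

lemma sderiv'_sderiv' (g : ℍq → ℍq) (x : ℍq) : sderiv' (sderiv' g) x = 0 :=
  sderiv'_of_even (sderiv'_star g) x

lemma cderiv_congr {h p : ℍq → ℍq} {x : ℍq} (he : h =ᶠ[nhds x] p) :
    cderiv h x = cderiv p x := by
  rw [cderiv, cderiv, he.fderiv_eq]

lemma fderiv_add_apply' {a b : ℍq → ℍq} {x : ℍq} (ha : DifferentiableAt ℝ a x)
    (hb : DifferentiableAt ℝ b x) (w : ℍq) :
    fderiv ℝ (fun y => a y + b y) x w = fderiv ℝ a x w + fderiv ℝ b x w := by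
  rw [show (fun y => a y + b y) = a + b from rfl, fderiv_add ha hb]
  rfl

lemma sderiv'_sprod (f g : ℍq → ℍq) (y : ℍq) (hy : y.im ≠ 0) :
    sderiv' (sprod f g) y = svalue f y * sderiv' g y + sderiv' f y * svalue g y := by
  have h : sprod f g = sprod' f g := rfl
  rw [h]
  exact sderiv'_sprod' f g y hy

set_option maxHeartbeats 2000000 in
/-- first iteration formula for `∂_c∂_s` of a slice product. -/
theorem opCS_sprod (Ω : Set ℍq) (hopen : IsOpen Ω) (hcirc : IsCircular Ω)
    (f g : ℍq → ℍq) (hf : IsSliceRegular Ω f) (hg : IsSliceRegular Ω g) :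
    ∀ x ∈ Ω, x.im ≠ 0 →
      opCS (sprod f g) x =
        sprod (opCS f) (svalue g) x
          + (1/2 : ℝ) • (sprod (sderiv' f) (cderiv g) x + sprod (cderiv f) (sderiv' g) x)
          + sprod (svalue f) (opCS g) x := by
  intro x hxΩ hxi
  obtain ⟨hfs, hfd, hfcr⟩ := hf
  obtain ⟨hgs, hgd, hgcr⟩ := hg
  have hr : ‖x.im‖ ≠ 0 := norm_ne_zero_iff.2 hxi
  have hsxΩ : star x ∈ Ω := by
    refine hcirc x hxΩ (star x) (Quaternion.re_star x) ?_
    rw [Quaternion.im_star, norm_neg]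
  have hsxi : (star x).im ≠ 0 := by rw [Quaternion.im_star]; simpa using hxi
  have hfx : DifferentiableAt ℝ f x := hfd.differentiableAt (hopen.mem_nhds hxΩ)
  have hfsx : DifferentiableAt ℝ f (star x) := hfd.differentiableAt (hopen.mem_nhds hsxΩ)
  have hgx : DifferentiableAt ℝ g x := hgd.differentiableAt (hopen.mem_nhds hxΩ)
  have hgsx : DifferentiableAt ℝ g (star x) := hgd.differentiableAt (hopen.mem_nhds hsxΩ)
  have hfxx : DifferentiableAt ℝ f (star (star x)) := by rwa [star_star]
  have hgxx : DifferentiableAt ℝ g (star (star x)) := by rwa [star_star]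
  have hdv : DifferentiableAt ℝ (svalue f) x := diff_svalue hfx hfsx
  have hds : DifferentiableAt ℝ (sderiv' f) x := diff_sderiv' hxi hfx hfsx
  have hdv' : DifferentiableAt ℝ (svalue f) (star x) := diff_svalue hfsx hfxx
  have hds' : DifferentiableAt ℝ (sderiv' f) (star x) := diff_sderiv' hsxi hfsx hfxx
  have hdw : DifferentiableAt ℝ (svalue g) x := diff_svalue hgx hgsx
  have hdt : DifferentiableAt ℝ (sderiv' g) x := diff_sderiv' hxi hgx hgsx
  have hdw' : DifferentiableAt ℝ (svalue g) (star x) := diff_svalue hgsx hgxx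
  have hdt' : DifferentiableAt ℝ (sderiv' g) (star x) := diff_sderiv' hsxi hgsx hgxx
  obtain ⟨mf1, mf2, mf3, mf4⟩ :=
    master hxi hdv hds hdv' hds' (hfcr x hxΩ hxi) (hfcr (star x) hsxΩ hsxi)
  obtain ⟨mg1, mg2, mg3, mg4⟩ :=
    master hxi hdw hdt hdw' hdt' (hgcr x hxΩ hxi) (hgcr (star x) hsxΩ hsxi)
  -- LHS
  have hPev : sderiv' (sprod f g)
      =ᶠ[nhds x] (fun y => svalue f y * sderiv' g y + sderiv' f y * svalue g y) := by
    filter_upwards [isOpen_imne.mem_nhds hxi] with y hy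
    exact sderiv'_sprod f g y hy
  have hL : opCS (sprod f g) x
      = cderiv (fun y => svalue f y * sderiv' g y + sderiv' f y * svalue g y) x :=
    cderiv_congr hPev
  have hP1 : fderiv ℝ (fun y => svalue f y * sderiv' g y + sderiv' f y * svalue g y) x 1
      = (fderiv ℝ (svalue f) x 1 * sderiv' g x + svalue f x * fderiv ℝ (sderiv' g) x 1)
        + (fderiv ℝ (sderiv' f) x 1 * svalue g x + sderiv' f x * fderiv ℝ (svalue g) x 1) := by
    rw [fderiv_add_apply' (a := fun y => svalue f y * sderiv' g y)
      (b := fun y => sderiv' f y * svalue g y) (hdv.mul hdt) (hds.mul hdw) 1, fderiv_mul_apply' hdv hdt 1,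
      fderiv_mul_apply' hds hdw 1]
  have hPn : fderiv ℝ (fun y => svalue f y * sderiv' g y + sderiv' f y * svalue g y) x x.im
      = (fderiv ℝ (svalue f) x x.im * sderiv' g x + svalue f x * fderiv ℝ (sderiv' g) x x.im)
        + (fderiv ℝ (sderiv' f) x x.im * svalue g x + sderiv' f x * fderiv ℝ (svalue g) x x.im)
      := by
    rw [fderiv_add_apply' (a := fun y => svalue f y * sderiv' g y)
      (b := fun y => sderiv' f y * svalue g y) (hdv.mul hdt) (hds.mul hdw) x.im, fderiv_mul_apply' hdv hdt x.im,
      fderiv_mul_apply' hds hdw x.im]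
  rw [hL, cderiv_at, hP1, hPn]
  -- RHS
  simp only [sprod, opCS]
  rw [svalue_cderiv_even (sderiv'_star f) x, sderiv'_cderiv_even (sderiv'_star f) x hxi,
    svalue_cderiv_even (sderiv'_star g) x, sderiv'_cderiv_even (sderiv'_star g) x hxi,
    svalue_svalue, sderiv'_svalue, svalue_sderiv', sderiv'_sderiv',
    svalue_svalue, sderiv'_svalue, svalue_sderiv', sderiv'_sderiv', mf1, mf2, mg1, mg2]
  have mf3s : fderiv ℝ (svalue f) x x.im
      = (-(‖x.im‖ * ‖x.im‖) : ℝ) • fderiv ℝ (sderiv' f) x 1 := by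
    rw [mf3, ← mul_assoc, aux_im_mul_im, Quaternion.coe_mul_eq_smul]
  have mg3s : fderiv ℝ (svalue g) x x.im
      = (-(‖x.im‖ * ‖x.im‖) : ℝ) • fderiv ℝ (sderiv' g) x 1 := by
    rw [mg3, ← mul_assoc, aux_im_mul_im, Quaternion.coe_mul_eq_smul]
  rw [mf3s, mg3s]
  simp only [mul_zero, zero_mul, add_zero, zero_add, mul_add, add_mul, ← mul_assoc,
    smul_mul_assoc, mul_smul_comm, smul_add, smul_sub, smul_smul, smul_zero]
  try simp only [aux_im_mul_im, Quaternion.coe_mul_eq_smul, smul_mul_assoc, mul_smul_comm,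
    smul_smul]
  match_scalars <;> field_simp <;> ring
end
end

section
/- Let q₀ ∈ ℍ ∖ ℝ and p ≥ 1. Then for all 0 ≤ k ≤ p, the value of ∂_s(∂_c∂_s)^k applied to the polynomial x ↦ Δ_{q₀}^p(x)(x − q₀), evaluated at x = q₀, equals k! if k = p and 0 otherwise. -/
noncomputable section

open Quaternion

open scoped RealInnerProductSpace

namespace SOPAux

/-- squared norm of the imaginary part -/
def nsq (x : ℍq) : ℝ := ‖x.im‖ ^ 2

def phiq (x : ℍq) : ℝ × ℝ := (x.re, nsq x)

def imL : ℍq →ₗ[ℝ] ℍq where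
  toFun := Quaternion.im
  map_add' := by intro a b; ext <;> simp
  map_smul' := by intro r a; ext <;> simp

def imCLM : ℍq →L[ℝ] ℍq := imL.toContinuousLinearMap

def reCLM : ℍq →L[ℝ] ℝ :=
  (show ℍq →ₗ[ℝ] ℝ from QuaternionAlgebra.reₗ _ _ _).toContinuousLinearMap

@[simp] lemma imCLM_apply (x : ℍq) : imCLM x = x.im := rfl
@[simp] lemma reCLM_apply (x : ℍq) : reCLM x = x.re := rfl

lemma phiq_star (x : ℍq) : phiq (star x) = phiq x := by
  simp [phiq, nsq]

lemma im_mul_im (x : ℍq) : x.im * x.im = -((nsq x : ℝ) : ℍq) := by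
  have h1 : x.im ^ 2 = -((Quaternion.normSq x.im : ℝ) : ℍq) := Quaternion.im_sq (a := x)
  have h2 : nsq x = Quaternion.normSq x.im := by
    rw [nsq, sq, Quaternion.normSq_eq_norm_mul_self]
  rw [← sq, h1, h2]


/-- bilinear product expansion in the quaternions -/
lemma prod_expand (m q₀ : ℍq) (u v U V : ℝ) :
    ((u : ℍq) + m * (v : ℍq)) * ((U : ℍq) + m * (V : ℍq))
      = ((u * U : ℝ) : ℍq) + m * ((u * V + v * U : ℝ) : ℍq) + (v * V) • (m * m) := by
  ext <;> simp [Quaternion.re_mul, Quaternion.imI_mul, Quaternion.imJ_mul,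
    Quaternion.imK_mul] <;> ring

/-- stem coefficients of `Delta^j` -/
def Uv (a n : ℝ) : ℕ → ℝ × ℝ → ℝ × ℝ
  | 0, _ => (1, 0)
  | (j+1), z =>
      ((z.1 ^ 2 - z.2 - 2 * a * z.1 + n) * (Uv a n j z).1
          - z.2 * (2 * (z.1 - a)) * (Uv a n j z).2,
        (z.1 ^ 2 - z.2 - 2 * a * z.1 + n) * (Uv a n j z).2
          + (2 * (z.1 - a)) * (Uv a n j z).1)

lemma contDiff_Uv (a n : ℝ) (j : ℕ) : ContDiff ℝ (⊤ : ℕ∞) (Uv a n j) := by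
  induction j with
  | zero => exact contDiff_const
  | succ j ih =>
    have h1 : ContDiff ℝ (⊤ : ℕ∞) (fun z : ℝ × ℝ => (Uv a n j z).1) := contDiff_fst.comp ih
    have h2 : ContDiff ℝ (⊤ : ℕ∞) (fun z : ℝ × ℝ => (Uv a n j z).2) := contDiff_snd.comp ih
    have hu : ContDiff ℝ (⊤ : ℕ∞) (fun z : ℝ × ℝ => z.1 ^ 2 - z.2 - 2 * a * z.1 + n) := by
      fun_prop
    show ContDiff ℝ (⊤ : ℕ∞) (fun z => Uv a n (j+1) z)
    simp only [Uv]
    exact ((hu.mul h1).sub ((contDiff_snd.mul (by fun_prop)).mul h2)).prodMk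
      ((hu.mul h2).add ((by fun_prop : ContDiff ℝ (⊤ : ℕ∞)
        (fun z : ℝ × ℝ => 2 * (z.1 - a))).mul h1))

lemma nsq_eq (x : ℍq) : nsq x = x.imI ^ 2 + x.imJ ^ 2 + x.imK ^ 2 := by
  have h : nsq x = Quaternion.normSq x.im := by
    rw [nsq, sq, Quaternion.normSq_eq_norm_mul_self]
  rw [h, Quaternion.normSq_def']
  simp [sq]

lemma delta_eq (q₀ x : ℍq) :
    Delta q₀ x = ((x.re ^ 2 - nsq x - 2 * q₀.re * x.re + ‖q₀‖ ^ 2 : ℝ) : ℍq)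
      + x.im * ((2 * (x.re - q₀.re) : ℝ) : ℍq) := by
  have h2 : (2 : ℍq) = ((2 : ℝ) : ℍq) := by norm_cast
  rw [Delta, h2]
  ext <;>
    simp [Delta, pow_two, Quaternion.re_mul, Quaternion.imI_mul, Quaternion.imJ_mul,
      Quaternion.imK_mul, nsq_eq] <;> ring

lemma delta_pow_eq (q₀ x : ℍq) (j : ℕ) :
    Delta q₀ x ^ j = (((Uv q₀.re (‖q₀‖^2) j (phiq x)).1 : ℝ) : ℍq)
      + x.im * (((Uv q₀.re (‖q₀‖^2) j (phiq x)).2 : ℝ) : ℍq) := by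
  induction j with
  | zero => simp [Uv]
  | succ j ih =>
    rw [pow_succ, ih, delta_eq q₀ x]
    simp only [Uv, phiq]
    ext <;>
      simp [pow_two, Quaternion.re_mul, Quaternion.imI_mul, Quaternion.imJ_mul,
        Quaternion.imK_mul, nsq_eq] <;> ring

lemma Uv_eval (a n : ℝ) (j : ℕ) (s : ℝ) :
    Uv a n j (a, s) = ((n - a ^ 2 - s) ^ j, 0) := by
  induction j with
  | zero => simp [Uv]
  | succ j ih =>
    simp only [Uv, ih, pow_succ, Prod.mk.injEq]
    constructor <;> ring

lemma norm_sq_decomp (q : ℍq) : ‖q‖ ^ 2 = q.re ^ 2 + ‖q.im‖ ^ 2 := by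
  have h1 : ‖q‖ ^ 2 = Quaternion.normSq q := by
    rw [sq, Quaternion.normSq_eq_norm_mul_self]
  have h2 : ‖q.im‖ ^ 2 = Quaternion.normSq q.im := by
    rw [sq, Quaternion.normSq_eq_norm_mul_self]
  rw [h1, h2, Quaternion.normSq_def', Quaternion.normSq_def']
  simp
  ring

lemma two_ne_zero'' : (2 : ℍq) ≠ 0 := by
  rw [show (2:ℍq) = ((2:ℝ):ℍq) by norm_cast, ne_eq, ← Quaternion.coe_zero, Quaternion.coe_inj]
  norm_num

def H0 (q₀ : ℍq) (p : ℕ) (z : ℝ × ℝ) : ℍq :=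
  ((((Uv q₀.re (‖q₀‖ ^ 2) p z).1 + (Uv q₀.re (‖q₀‖ ^ 2) p z).2 * z.1 : ℝ)) : ℍq)
    - ((Uv q₀.re (‖q₀‖ ^ 2) p z).2) • q₀

lemma contDiff_coe : ContDiff ℝ (⊤ : ℕ∞) (fun r : ℝ => (r : ℍq)) := by
  have h : (fun r : ℝ => (r : ℍq)) = fun r : ℝ => r • (1 : ℍq) := by
    funext r
    rw [← Quaternion.coe_one, Quaternion.smul_coe, mul_one]
  rw [h]
  exact contDiff_id.smul contDiff_const

lemma contDiff_H0 (q₀ : ℍq) (p : ℕ) : ContDiff ℝ (⊤ : ℕ∞) (H0 q₀ p) := by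
  have h1 : ContDiff ℝ (⊤ : ℕ∞) (fun z : ℝ × ℝ => (Uv q₀.re (‖q₀‖ ^ 2) p z).1) :=
    contDiff_fst.comp (contDiff_Uv _ _ _)
  have h2 : ContDiff ℝ (⊤ : ℕ∞) (fun z : ℝ × ℝ => (Uv q₀.re (‖q₀‖ ^ 2) p z).2) :=
    contDiff_snd.comp (contDiff_Uv _ _ _)
  exact (contDiff_coe.comp (h1.add (h2.mul contDiff_fst))).sub (h2.smul contDiff_const)

lemma sderiv_base (q₀ : ℍq) (p : ℕ) (x : ℍq) (hx : x.im ≠ 0) :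
    sderiv' (fun x => Delta q₀ x ^ p * (x - q₀)) x = H0 q₀ p (phiq x) := by
  have htwo : (2 * x.im : ℍq) ≠ 0 := mul_ne_zero two_ne_zero'' hx
  have hUx := delta_pow_eq q₀ x p
  have hUsx := delta_pow_eq q₀ (star x) p
  rw [phiq_star] at hUsx
  rw [sderiv', hUx, hUsx]
  have key : (((Uv q₀.re (‖q₀‖ ^ 2) p (phiq x)).1 : ℍq)
        + x.im * ((Uv q₀.re (‖q₀‖ ^ 2) p (phiq x)).2 : ℍq)) * (x - q₀)
      - (((Uv q₀.re (‖q₀‖ ^ 2) p (phiq x)).1 : ℍq)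
        + (star x).im * ((Uv q₀.re (‖q₀‖ ^ 2) p (phiq x)).2 : ℍq)) * (star x - q₀)
      = (2 * x.im) * (H0 q₀ p (phiq x)) := by
    rw [H0, show (2:ℍq) = ((2:ℝ):ℍq) by norm_cast]
    ext <;>
      simp [phiq, Quaternion.re_mul, Quaternion.imI_mul, Quaternion.imJ_mul,
        Quaternion.imK_mul] <;> ring
  rw [key, inv_mul_cancel_left₀ htwo]

lemma H0_eval (q₀ : ℍq) (p : ℕ) (s : ℝ) :
    H0 q₀ p (q₀.re, s) = (((‖q₀.im‖ ^ 2 - s) ^ p : ℝ) : ℍq) := by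
  have hb : ‖q₀‖ ^ 2 - q₀.re ^ 2 - s = ‖q₀.im‖ ^ 2 - s := by
    rw [norm_sq_decomp]; ring
  rw [H0, Uv_eval]
  simp [hb]

lemma hasFDerivAt_phiq (y : ℍq) :
    HasFDerivAt phiq (reCLM.prod ((2 : ℝ) • ((innerSL ℝ y.im).comp imCLM))) y := by
  apply HasFDerivAt.prodMk
  · exact reCLM.hasFDerivAt
  · have h : HasFDerivAt (fun z : ℍq => ⟪imCLM z, imCLM z⟫)
        ((fderivInnerCLM ℝ (imCLM y, imCLM y)).comp (imCLM.prod imCLM)) y :=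
      imCLM.hasFDerivAt.inner ℝ imCLM.hasFDerivAt
    have heq : nsq = fun z : ℍq => ⟪imCLM z, imCLM z⟫ := by
      funext z
      rw [imCLM_apply, real_inner_self_eq_norm_sq, nsq]
    rw [heq]
    refine h.congr_fderiv ?_
    apply ContinuousLinearMap.ext
    intro v
    simp [real_inner_comm, two_mul]

lemma fderiv_comp_one (H : ℝ × ℝ → ℍq) (hH : Differentiable ℝ H) (x : ℍq) :
    fderiv ℝ (fun y => H (phiq y)) x 1 = fderiv ℝ H (phiq x) (1, 0) := by
  have hc : HasFDerivAt (fun y => H (phiq y))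
      ((fderiv ℝ H (phiq x)).comp (reCLM.prod ((2 : ℝ) • ((innerSL ℝ x.im).comp imCLM)))) x :=
    (hH.differentiableAt.hasFDerivAt).comp x (hasFDerivAt_phiq x)
  rw [hc.fderiv]
  simp

lemma fderiv_comp_qJ (H : ℝ × ℝ → ℍq) (hH : Differentiable ℝ H) (x : ℍq) (hx : x.im ≠ 0) :
    fderiv ℝ (fun y => H (phiq y)) x (qJ x)
      = (2 * ‖x.im‖) • fderiv ℝ H (phiq x) (0, 1) := by
  have hc : HasFDerivAt (fun y => H (phiq y))
      ((fderiv ℝ H (phiq x)).comp (reCLM.prod ((2 : ℝ) • ((innerSL ℝ x.im).comp imCLM)))) x :=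
    (hH.differentiableAt.hasFDerivAt).comp x (hasFDerivAt_phiq x)
  rw [hc.fderiv]
  have hb : ‖x.im‖ ≠ 0 := norm_ne_zero_iff.mpr hx
  have harg : (reCLM.prod ((2 : ℝ) • ((innerSL ℝ x.im).comp imCLM))) (qJ x)
      = ((2 * ‖x.im‖) • ((0, 1) : ℝ × ℝ)) := by
    have h1 : (qJ x).re = 0 := by simp [qJ]
    have h2 : (qJ x).im = ‖x.im‖⁻¹ • x.im := by
      rw [qJ]; ext <;> simp
    simp only [ContinuousLinearMap.prod_apply, ContinuousLinearMap.coe_comp',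
      Function.comp_apply, ContinuousLinearMap.coe_smul', Pi.smul_apply,
      imCLM_apply, reCLM_apply, h1, h2, innerSL_apply_apply]
    rw [real_inner_smul_right, real_inner_self_eq_norm_sq]
    rw [Prod.smul_mk]
    simp
    field_simp
  rw [ContinuousLinearMap.comp_apply, harg, map_smul]

lemma cderiv_comp (H : ℝ × ℝ → ℍq) (hH : Differentiable ℝ H) (x : ℍq) (hx : x.im ≠ 0) :
    cderiv (fun y => H (phiq y)) x
      = (1/2 : ℝ) • fderiv ℝ H (phiq x) (1, 0) - x.im * fderiv ℝ H (phiq x) (0, 1) := by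
  have hb : ‖x.im‖ ≠ 0 := norm_ne_zero_iff.mpr hx
  rw [cderiv, fderiv_comp_one H hH x, fderiv_comp_qJ H hH x hx]
  rw [qJ, smul_sub]
  rw [mul_smul_comm, smul_mul_assoc, smul_smul, smul_smul]
  congr 1
  have h1 : (1/2 : ℝ) * (2 * ‖x.im‖) * ‖x.im‖⁻¹ = 1 := by field_simp
  rw [h1, one_smul]

lemma step_lemma (g : ℍq → ℍq) (H : ℝ × ℝ → ℍq) (hH : Differentiable ℝ H)
    (hg : ∀ x : ℍq, x.im ≠ 0 → g x = H (phiq x)) (y : ℍq) (hy : y.im ≠ 0) :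
    sderiv' (cderiv g) y = -(fderiv ℝ H (phiq y) (0, 1)) := by
  have hopen : IsOpen {x : ℍq | x.im ≠ 0} :=
    isOpen_compl_singleton.preimage Quaternion.continuous_im
  have hc : ∀ z : ℍq, z.im ≠ 0 → cderiv g z = cderiv (fun w => H (phiq w)) z := by
    intro z hz
    have hev : g =ᶠ[nhds z] fun w => H (phiq w) :=
      Filter.eventuallyEq_of_mem (hopen.mem_nhds hz) fun w hw => hg w hw
    rw [cderiv, cderiv, hev.fderiv_eq]
  have hsy : (star y).im ≠ 0 := by simpa using hy
  rw [sderiv', hc y hy, hc (star y) hsy, cderiv_comp H hH y hy, cderiv_comp H hH (star y) hsy,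
    phiq_star]
  have him : (star y).im = -y.im := by simp
  rw [him]
  have key : ((1/2 : ℝ) • fderiv ℝ H (phiq y) (1, 0) - y.im * fderiv ℝ H (phiq y) (0, 1))
      - ((1/2 : ℝ) • fderiv ℝ H (phiq y) (1, 0) - (-y.im) * fderiv ℝ H (phiq y) (0, 1))
      = (2 * y.im) * (-(fderiv ℝ H (phiq y) (0, 1))) := by
    simp only [neg_mul, sub_neg_eq_add, mul_neg, two_mul, add_mul]
    abel
  rw [key, inv_mul_cancel_left₀ (mul_ne_zero two_ne_zero'' hy)]

lemma coe_smul_one (r : ℝ) : (r : ℍq) = r • (1 : ℍq) := by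
  rw [← Quaternion.coe_one, Quaternion.smul_coe, mul_one]

end SOPAux

open SOPAux

/-- `∂_s(∂_c∂_s)^k (Δ_{q₀}^p(x)(x−q₀))` at `q₀` is `k!` when
`k = p` and `0` otherwise. -/
theorem sderiv_opCS_iterate_Delta_pow_mul (q₀ : ℍq) (hq₀ : q₀.im ≠ 0)
    (p k : ℕ) (hp : 1 ≤ p) (hk : k ≤ p) :
    sderiv' (opCS^[k] (fun x => Delta q₀ x ^ p * (x - q₀))) q₀
      = if k = p then (k.factorial : ℍq) else 0 := by
  have invariant : ∀ k, k ≤ p → ∃ H : ℝ × ℝ → ℍq, ContDiff ℝ (⊤ : ℕ∞) H ∧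
      (∀ x : ℍq, x.im ≠ 0 →
        sderiv' (opCS^[k] (fun x => Delta q₀ x ^ p * (x - q₀))) x = H (phiq x)) ∧
      (∀ s : ℝ, H (q₀.re, s)
        = (((p.descFactorial k : ℝ) * (‖q₀.im‖ ^ 2 - s) ^ (p - k) : ℝ) : ℍq)) := by
    intro k
    induction k with
    | zero =>
      intro _
      refine ⟨H0 q₀ p, contDiff_H0 q₀ p, ?_, ?_⟩
      · intro x hx
        simpa using sderiv_base q₀ p x hx
      · intro s
        rw [H0_eval]
        norm_num
    | succ k ih =>
      intro hk1
      obtain ⟨H, hH, h2, h3⟩ := ih (Nat.le_of_succ_le hk1)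
      have hkp : k < p := hk1
      have hHd : Differentiable ℝ H := hH.differentiable (by simp)
      refine ⟨fun z => -(fderiv ℝ H z (0, 1)), ?_, ?_, ?_⟩
      · have hcond : ((⊤ : ℕ∞) : WithTop ℕ∞) + 1 ≤ ((⊤ : ℕ∞) : WithTop ℕ∞) := by
          norm_cast
        exact ((hH.fderiv_right hcond).clm_apply contDiff_const).neg
      · intro x hx
        rw [Function.iterate_succ_apply']
        exact step_lemma _ H hHd h2 x hx
      · intro s
        have hψ : HasFDerivAt (fun t : ℝ => ((q₀.re, t) : ℝ × ℝ))
            ((0 : ℝ →L[ℝ] ℝ).prod (ContinuousLinearMap.id ℝ ℝ)) s :=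
          (hasFDerivAt_const _ _).prodMk (hasFDerivAt_id s)
        have hcomp : HasFDerivAt (fun t : ℝ => H (q₀.re, t))
            ((fderiv ℝ H (q₀.re, s)).comp
              ((0 : ℝ →L[ℝ] ℝ).prod (ContinuousLinearMap.id ℝ ℝ))) s :=
          (hHd.differentiableAt.hasFDerivAt).comp s hψ
        have hd1 : HasDerivAt (fun t : ℝ => H (q₀.re, t))
            (fderiv ℝ H (q₀.re, s) (0, 1)) s := by
          have h := hcomp.hasDerivAt
          simpa using h
        have heq : (fun t : ℝ => H (q₀.re, t))
            = fun t : ℝ => ((p.descFactorial k : ℝ) * (‖q₀.im‖ ^ 2 - t) ^ (p - k)) • (1 : ℍq) := by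
          funext t
          rw [h3 t, coe_smul_one]
        have hd2 : HasDerivAt
            (fun t : ℝ => ((p.descFactorial k : ℝ) * (‖q₀.im‖ ^ 2 - t) ^ (p - k)) • (1 : ℍq))
            (((p.descFactorial k : ℝ) * (((p - k : ℕ) : ℝ) * (‖q₀.im‖ ^ 2 - s) ^ (p - k - 1)
              * (-1))) • (1 : ℍq)) s :=
          ((((hasDerivAt_id s).const_sub (‖q₀.im‖ ^ 2)).pow (p - k)).const_mul
            (p.descFactorial k : ℝ)).smul_const (1 : ℍq)
        rw [heq] at hd1
        have huniq := hd2.unique hd1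
        show -(fderiv ℝ H (q₀.re, s) (0, 1)) = _
        rw [← huniq, coe_smul_one, ← neg_smul]
        congr 1
        rw [Nat.descFactorial_succ, show p - (k + 1) = p - k - 1 from by omega]
        push_cast
        ring
  obtain ⟨H, hH, h2, h3⟩ := invariant k hk
  rw [h2 q₀ hq₀, show phiq q₀ = (q₀.re, ‖q₀.im‖ ^ 2) from rfl, h3]
  by_cases hkep : k = p
  · subst hkep
    rw [if_pos rfl]
    simp [Nat.descFactorial_self]
    norm_cast
  · rw [if_neg hkep]
    have hne : p - k ≠ 0 := by omega
    simp [sub_self, zero_pow hne]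
end
end

section
/- Let q₀ ∈ ℍ ∖ ℝ, m ≥ 1, and set 𝔓_{q₀,m}(x) = m(x − q₀)^{·2} + (m+1)Δ_{q₀}(x), where (x−q₀)^{·2} denotes the slice square. Then: (v_s 𝔓_{q₀,m})(q₀) = 2m(Im q₀)², (∂_s 𝔓_{q₀,m})(q₀) = −2m·Im(q₀), (∂_c 𝔓_{q₀,m})(q₀) = 2(m+1)·Im(q₀), (∂_c∂_s)𝔓_{q₀,m} ≡ 2m+1, and (∂_s∂_c)𝔓_{q₀,m} ≡ 2(2m+1). -/
noncomputable section

open Quaternion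

/-- The polynomial `𝔓_{q₀,m}(x) = m(x−q₀)^{·2} + (m+1)Δ_{q₀}(x)`, where
`(x−q₀)^{·2} = x² − x(2q₀) + q₀²` is the slice square of `x − q₀`. -/
def frakP (q₀ : ℍq) (m : ℕ) : ℍq → ℍq :=
  fun x => (m : ℍq) * (x ^ 2 - x * (2 * q₀) + q₀ ^ 2) + ((m : ℍq) + 1) * Delta q₀ x

/- ---------------- auxiliary lemmas ---------------- -/

set_option maxHeartbeats 1000000
set_option synthInstance.maxHeartbeats 400000

lemma two_q : (2:ℍq) = ((2:ℝ):ℍq) := by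
  have : ((2:ℕ):ℍq) = (((2:ℕ):ℝ):ℍq) := by norm_cast
  simpa using this

lemma two_ne_zero_q : (2:ℍq) ≠ 0 := by
  rw [two_q, show (0:ℍq) = ((0:ℝ):ℍq) by simp, Ne, Quaternion.coe_inj]
  norm_num

lemma halver (z : ℍq) : (1/2 : ℝ) • (2 * z) = z := by
  rw [two_q]
  ext <;> simp

lemma frakP_apply_self (q₀ : ℍq) (m : ℕ) : frakP q₀ m q₀ = 0 := by
  rw [frakP, Delta, two_q]
  ext <;> simp [pow_two, ← Quaternion.normSq_eq_norm_mul_self, Quaternion.normSq_def',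
    Quaternion.re_natCast, Quaternion.imI_natCast, Quaternion.imJ_natCast,
    Quaternion.imK_natCast] <;> ring

lemma frakP_apply_star (q₀ : ℍq) (m : ℕ) :
    frakP q₀ m (star q₀) = 2 * (2 * (m : ℍq) * q₀.im ^ 2) := by
  rw [frakP, Delta, two_q]
  ext <;> simp [pow_two, ← Quaternion.normSq_eq_norm_mul_self, Quaternion.normSq_def',
    Quaternion.re_natCast, Quaternion.imI_natCast, Quaternion.imJ_natCast,
    Quaternion.imK_natCast] <;> ring

lemma frakP_sub_star (q₀ : ℍq) (m : ℕ) (x : ℍq) :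
    frakP q₀ m x - frakP q₀ m (star x)
      = (2 * x.im) * (2 * (2 * (m:ℍq) + 1) * (x.re:ℍq)
          - (2 * (m:ℍq) * q₀ + 2 * ((m:ℍq) + 1) * (q₀.re:ℍq))) := by
  rw [frakP, frakP, Delta, Delta, two_q]
  ext <;> simp [pow_two, ← Quaternion.normSq_eq_norm_mul_self, Quaternion.normSq_def',
    Quaternion.re_natCast, Quaternion.imI_natCast, Quaternion.imJ_natCast,
    Quaternion.imK_natCast] <;> ring

lemma sderiv'_frakP (q₀ : ℍq) (m : ℕ) (x : ℍq) (hx : x.im ≠ 0) :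
    sderiv' (frakP q₀ m) x
      = 2 * (2 * (m:ℍq) + 1) * (x.re:ℍq)
          - (2 * (m:ℍq) * q₀ + 2 * ((m:ℍq) + 1) * (q₀.re:ℍq)) := by
  have h2 : (2 * x.im : ℍq) ≠ 0 := mul_ne_zero two_ne_zero_q hx
  rw [sderiv', frakP_sub_star, inv_mul_cancel_left₀ h2]

/- fderiv of frakP -/

open ContinuousLinearMap in
lemma sq_hasFDerivAt (x : ℍq) :
    HasFDerivAt (fun y : ℍq => y^2)
      (x • ContinuousLinearMap.id ℝ ℍq + (ContinuousLinearMap.id ℝ ℍq).smulRight x) x := by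
  have h := HasFDerivAt.fun_mul' (𝕜:=ℝ) (hasFDerivAt_id x) (hasFDerivAt_id x)
  simp only [pow_two]
  refine h.congr_fderiv ?_
  ext y <;> simp

open ContinuousLinearMap in
lemma frakP_hasFDerivAt (q₀ : ℍq) (m : ℕ) (x : ℍq) :
    HasFDerivAt (frakP q₀ m)
      ((m:ℍq) • (x • ContinuousLinearMap.id ℝ ℍq + (ContinuousLinearMap.id ℝ ℍq).smulRight x
          - (ContinuousLinearMap.id ℝ ℍq).smulRight (2*q₀))
       + ((m:ℍq)+1) • (x • ContinuousLinearMap.id ℝ ℍq + (ContinuousLinearMap.id ℝ ℍq).smulRight x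
          - (2*(q₀.re:ℍq)) • ContinuousLinearMap.id ℝ ℍq)) x := by
  unfold frakP Delta
  exact ((((sq_hasFDerivAt x).sub ((hasFDerivAt_id x).mul_const' (2*q₀))).add_const
      (q₀^2)).const_mul (m:ℍq)).add
    ((((sq_hasFDerivAt x).sub ((hasFDerivAt_id x).const_mul
      (2*(q₀.re:ℍq)))).add_const _).const_mul ((m:ℍq)+1))

lemma frakP_fderiv_apply (q₀ : ℍq) (m : ℕ) (x h : ℍq) :
    fderiv ℝ (frakP q₀ m) x h
      = (m:ℍq)*(x*h + h*x - h*(2*q₀)) + ((m:ℍq)+1)*(x*h + h*x - 2*(q₀.re:ℍq)*h) := by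
  rw [(frakP_hasFDerivAt q₀ m x).fderiv]
  simp [smul_eq_mul, mul_assoc, mul_add, mul_sub]

/- qJ lemmas -/

lemma im_mul_im (x : ℍq) : x.im * x.im = -((‖x.im‖^2 : ℝ):ℍq) := by
  ext <;> simp [← Quaternion.normSq_eq_norm_mul_self, Quaternion.normSq_def', pow_two] <;> ring

lemma qJ_mul_qJ (x : ℍq) (hx : x.im ≠ 0) : qJ x * qJ x = -1 := by
  have hr : ‖x.im‖ ≠ 0 := norm_ne_zero_iff.2 hx
  rw [qJ, smul_mul_smul_comm, im_mul_im, smul_neg, ← Quaternion.coe_smul]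
  have : (‖x.im‖⁻¹ * ‖x.im‖⁻¹) • (‖x.im‖^2) = (1:ℝ) := by
    field_simp
    rw [smul_eq_mul, one_div, inv_mul_cancel₀ (pow_ne_zero 2 hr)]
  rw [this, Quaternion.coe_one]

lemma qJ_comm (x : ℍq) : qJ x * x = x * qJ x := by
  have him : x.im * x = x * x.im := by ext <;> simp <;> ring
  rw [qJ, smul_mul_assoc, mul_smul_comm, him]

lemma qJ_re (x : ℍq) : (qJ x).re = 0 := by
  simp [qJ]

lemma cderiv_frakP (q₀ : ℍq) (m : ℕ) (x : ℍq) (hx : x.im ≠ 0) :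
    cderiv (frakP q₀ m) x
      = 2 * (2 * (m:ℍq) + 1) * x
          - (2 * (m:ℍq) * q₀ + 2 * ((m:ℍq) + 1) * (q₀.re:ℍq)) := by
  rw [cderiv, frakP_fderiv_apply, frakP_fderiv_apply]
  set j := qJ x with hj
  have hjj : j * j = -1 := qJ_mul_qJ x hx
  have hjx : j * x = x * j := qJ_comm x
  have h1 : j * (x * j) = -x := by
    rw [← mul_assoc, hjx, mul_assoc, hjj, mul_neg_one]
  have h2 : j * (j * x) = -x := by rw [← mul_assoc, hjj, neg_one_mul]
  have h3 : j * (j * (2*q₀)) = -(2*q₀) := by rw [← mul_assoc, hjj, neg_one_mul]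
  have h4 : j * (2*(q₀.re:ℍq)*j) = -(2*(q₀.re:ℍq)) := by
    have hc : 2*(q₀.re:ℍq)*j = j * (2*(q₀.re:ℍq)) := by
      rw [two_q, ← Quaternion.coe_mul, Quaternion.coe_commutes]
    rw [hc, ← mul_assoc, hjj, neg_one_mul]
  have jm : ∀ z : ℍq, j * ((m:ℍq) * z) = (m:ℍq) * (j * z) := fun z => by
    rw [← mul_assoc, ← (Nat.cast_commute m j).eq, mul_assoc]
  have jm1 : ∀ z : ℍq, j * (((m:ℍq)+1) * z) = ((m:ℍq)+1) * (j * z) := fun z => by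
    rw [← mul_assoc, ← ((Nat.cast_commute m j).add_left (Commute.one_left j)).eq, mul_assoc]
  have key : j * ((m:ℍq)*(x*j + j*x - j*(2*q₀)) + ((m:ℍq)+1)*(x*j + j*x - 2*(q₀.re:ℍq)*j))
      = (m:ℍq)*(-x + -x - -(2*q₀)) + ((m:ℍq)+1)*(-x + -x - -(2*(q₀.re:ℍq))) := by
    simp only [mul_add, mul_sub, jm, jm1, h1, h2, h3, h4]
  rw [key]
  have e : ∀ z w : ℍq, z = 2 * w → (1/2 : ℝ) • z = w := by
    intro z w h
    rw [h]
    exact halver w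
  apply e
  noncomm_ring

/-- The continuous linear map `y ↦ ↑y.re` on quaternions. -/
def reCLM : ℍq →L[ℝ] ℍq where
  toFun := fun y => ((y.re : ℝ) : ℍq)
  map_add' := by intro a b; ext <;> simp
  map_smul' := by intro r a; ext <;> simp
  cont := Quaternion.continuous_coe.comp Quaternion.continuous_re

lemma opCS_frakP (q₀ : ℍq) (m : ℕ) (x : ℍq) (hx : x.im ≠ 0) :
    opCS (frakP q₀ m) x = 2 * (m:ℍq) + 1 := by
  have hU : IsOpen {y : ℍq | y.im ≠ 0} :=
    isOpen_ne_fun Quaternion.continuous_im continuous_const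
  have hev : sderiv' (frakP q₀ m) =ᶠ[nhds x]
      (fun y => 2 * (2 * (m:ℍq) + 1) * (y.re:ℍq)
          - (2 * (m:ℍq) * q₀ + 2 * ((m:ℍq) + 1) * (q₀.re:ℍq))) :=
    Filter.eventuallyEq_of_mem (hU.mem_nhds hx) (fun y hy => sderiv'_frakP q₀ m y hy)
  have hg : HasFDerivAt
      (fun y : ℍq => 2 * (2 * (m:ℍq) + 1) * (y.re:ℍq)
          - (2 * (m:ℍq) * q₀ + 2 * ((m:ℍq) + 1) * (q₀.re:ℍq)))
      ((2 * (2 * (m:ℍq) + 1)) • reCLM) x :=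
    (reCLM.hasFDerivAt.const_mul (2 * (2 * (m:ℍq) + 1))).sub_const _
  rw [opCS, cderiv, hev.fderiv_eq, hg.fderiv]
  have e1 : ((2 * (2 * (m:ℍq) + 1)) • reCLM) 1 = 2 * (2 * (m:ℍq) + 1) := by
    simp [reCLM, smul_eq_mul]
  have e2 : ((2 * (2 * (m:ℍq) + 1)) • reCLM) (qJ x) = 0 := by
    simp [reCLM, smul_eq_mul, qJ_re x]
  rw [e1, e2, mul_zero, sub_zero, show (2 * (2 * (m:ℍq) + 1)) = 2 * (2 * (m:ℍq) + 1) from rfl]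
  exact halver _

lemma opSC_frakP (q₀ : ℍq) (m : ℕ) (x : ℍq) (hx : x.im ≠ 0) :
    opSC (frakP q₀ m) x = 2 * (2 * (m:ℍq) + 1) := by
  have hsx : (star x).im ≠ 0 := by
    have h : (star x).im = -x.im := by ext <;> simp
    rw [h]
    exact neg_ne_zero.2 hx
  have h2 : (2 * x.im : ℍq) ≠ 0 := mul_ne_zero two_ne_zero_q hx
  rw [opSC, sderiv', cderiv_frakP q₀ m x hx, cderiv_frakP q₀ m (star x) hsx]
  have key : (2 * (2 * (m:ℍq) + 1) * x
          - (2 * (m:ℍq) * q₀ + 2 * ((m:ℍq) + 1) * (q₀.re:ℍq)))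
      - (2 * (2 * (m:ℍq) + 1) * (star x)
          - (2 * (m:ℍq) * q₀ + 2 * ((m:ℍq) + 1) * (q₀.re:ℍq)))
      = (2 * x.im) * (2 * (2 * (m:ℍq) + 1)) := by
    rw [two_q]
    ext <;> simp [Quaternion.re_natCast, Quaternion.imI_natCast, Quaternion.imJ_natCast,
      Quaternion.imK_natCast] <;> ring
  rw [key, inv_mul_cancel_left₀ h2]

/-- values and derivatives of `𝔓_{q₀,m}`. -/
theorem frakP_derivatives (q₀ : ℍq) (hq₀ : q₀.im ≠ 0) (m : ℕ) (hm : 1 ≤ m) :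
    svalue (frakP q₀ m) q₀ = 2 * (m : ℍq) * q₀.im ^ 2
    ∧ sderiv' (frakP q₀ m) q₀ = -(2 * (m : ℍq)) * q₀.im
    ∧ cderiv (frakP q₀ m) q₀ = 2 * ((m : ℍq) + 1) * q₀.im
    ∧ (∀ x : ℍq, x.im ≠ 0 →
        opCS (frakP q₀ m) x = 2 * (m : ℍq) + 1
        ∧ opSC (frakP q₀ m) x = 2 * (2 * (m : ℍq) + 1)) := by
  refine ⟨?_, ?_, ?_, fun x hx => ⟨opCS_frakP q₀ m x hx, opSC_frakP q₀ m x hx⟩⟩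
  · rw [svalue, frakP_apply_self, frakP_apply_star, zero_add,
      div_eq_iff two_ne_zero_q, two_q]
    ext <;> simp [Quaternion.re_natCast, Quaternion.imI_natCast, Quaternion.imJ_natCast,
      Quaternion.imK_natCast, pow_two] <;> ring
  · rw [sderiv'_frakP q₀ m q₀ hq₀, two_q]
    ext <;> simp [Quaternion.re_natCast, Quaternion.imI_natCast, Quaternion.imJ_natCast,
      Quaternion.imK_natCast] <;> ring
  · rw [cderiv_frakP q₀ m q₀ hq₀, two_q]
    ext <;> simp [Quaternion.re_natCast, Quaternion.imI_natCast, Quaternion.imJ_natCast,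
      Quaternion.imK_natCast] <;> ring
end
end
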